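/- Let $\delta$ be the Euclidean metric on $\mathbb{R}^6$, $\sigma = (1-r^2)/2$, $n = d\sigma$ (so $n_a = -x_a$), and $\varphi$ a constant (parallel) $2$-form. Then the $2$-form $iF_{ab} = (1+2\sigma)\varphi_{ab} - n_a\varphi_{nb} + n_b\varphi_{na}$ (where $\varphi_{nb} = n^c\varphi_{cb}$) is closed and satisfies $\sigma\nabla^a F_{ab} = 2 n^a F_{ab}$, i.e. $F$ solves the Maxwell (Yang–Mills for $U(1)$) equations with respect to the hyperbolic metric $g_+ = \delta/\sigma^2$ on the open unit ball. -/
import Mathlib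


/-!
STATEMENT 13: The Maxwell solution on the hyperbolic 6-ball.  With the
Euclidean metric `δ` on `ℝ⁶`, `σ(x) = (1 - r²)/2`, `n = dσ` (so `n_a = -x_a`),
and `φ` a constant 2-form, the real 2-form
`G = iF`, `G_{ab}(x) = (1+2σ)φ_{ab} - n_aφ_{nb} + n_bφ_{na}` (where
`φ_{nb} = n^cφ_{cb}`) is closed and satisfies `σ∇^aF_{ab} = 2n^aF_{ab}`,
which in dimension 6 is exactly Maxwell's equations (closed and coclosed for
`g_+ = δ/σ²`) on the open unit ball.  `pd c h x = ∂h/∂x_c` is realized by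
`fderiv ℝ h x (Pi.single c 1)`; all indices raised/lowered with `δ`.
-/
lemma key13 (φ : Fin 6 → Fin 6 → ℝ) (x : Fin 6 → ℝ) (a b c : Fin 6) :
    fderiv ℝ (fun y : Fin 6 → ℝ =>
      (2 - ∑ i, y i * y i) * φ a b - y a * (∑ d, y d * φ d b) + y b * (∑ d, y d * φ d a))
      x (Pi.single c 1)
    = -2 * x c * φ a b - (if a = c then 1 else 0) * (∑ d, x d * φ d b)
      - x a * φ c b + (if b = c then 1 else 0) * (∑ d, x d * φ d a) + x b * φ c a := by
  have hproj : ∀ i : Fin 6, HasFDerivAt (fun y : Fin 6 → ℝ => y i)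
      (ContinuousLinearMap.proj (R := ℝ) (φ := fun _ : Fin 6 => ℝ) i) x :=
    fun i => (ContinuousLinearMap.proj (R := ℝ) (φ := fun _ : Fin 6 => ℝ) i).hasFDerivAt
  have hR2 := HasFDerivAt.sum (fun i (_ : i ∈ Finset.univ) => (hproj i).mul (hproj i))
  have hSb := HasFDerivAt.sum (fun d (_ : d ∈ Finset.univ) => (hproj d).mul_const (φ d b))
  have hSa := HasFDerivAt.sum (fun d (_ : d ∈ Finset.univ) => (hproj d).mul_const (φ d a))
  have H := ((((hasFDerivAt_const (2:ℝ) x).sub hR2).mul_const (φ a b)).sub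
      ((hproj a).mul hSb)).add ((hproj b).mul hSa)
  have H2 : HasFDerivAt (fun y : Fin 6 → ℝ =>
      (2 - ∑ i, y i * y i) * φ a b - y a * (∑ d, y d * φ d b) + y b * (∑ d, y d * φ d a))
      _ x := H
  rw [H2.fderiv]
  simp [ContinuousLinearMap.sum_apply, Pi.single_apply, Finset.sum_ite_eq',
    Finset.sum_add_distrib, mul_comm]
  ring

theorem statement13_maxwell_solution_hyperbolic_ball
    (φ : Fin 6 → Fin 6 → ℝ)
    (hφ : ∀ a b, φ a b = -φ b a)
    (σ : (Fin 6 → ℝ) → ℝ) (hσ : ∀ x, σ x = (1 - ∑ i, (x i) ^ 2) / 2)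
    (n : (Fin 6 → ℝ) → Fin 6 → ℝ) (hn : ∀ x a, n x a = -x a)
    (G : (Fin 6 → ℝ) → Fin 6 → Fin 6 → ℝ)
    (hG : ∀ x a b, G x a b
      = (1 + 2 * σ x) * φ a b
        - n x a * (∑ c, n x c * φ c b)
        + n x b * (∑ c, n x c * φ c a)) :
    ∀ x : Fin 6 → ℝ, (∑ i, (x i) ^ 2) < 1 →
      -- closedness: ∂_{[c}G_{ab]} = 0
      ((∀ a b c,
        fderiv ℝ (fun y => G y a b) x (Pi.single c 1)
          + fderiv ℝ (fun y => G y b c) x (Pi.single a 1)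
          + fderiv ℝ (fun y => G y c a) x (Pi.single b 1) = 0)
      -- coclosedness w.r.t. g_+ = δ/σ²:  σ ∇^a F_{ab} = 2 n^a F_{ab}
      ∧ (∀ b,
        σ x * (∑ a, fderiv ℝ (fun y => G y a b) x (Pi.single a 1))
          = 2 * ∑ a, n x a * G x a b)) := by
  intro x _
  have hφ0 : ∀ a, φ a a = 0 := fun a => by have := hφ a a; linarith
  have hfun : ∀ a b, (fun y => G y a b) = (fun y : Fin 6 → ℝ =>
      (2 - ∑ i, y i * y i) * φ a b - y a * (∑ d, y d * φ d b) + y b * (∑ d, y d * φ d a)) := by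
    intro a b; funext y; rw [hG, hσ]
    simp only [hn, neg_mul, Finset.sum_neg_distrib, pow_two]
    ring
  have key : ∀ a b c : Fin 6, fderiv ℝ (fun y => G y a b) x (Pi.single c 1)
      = -2 * x c * φ a b - (if a = c then 1 else 0) * (∑ d, x d * φ d b)
        - x a * φ c b + (if b = c then 1 else 0) * (∑ d, x d * φ d a) + x b * φ c a := by
    intro a b c; rw [hfun]; exact key13 φ x a b c
  have hC : (∑ a : Fin 6, x a * ∑ d : Fin 6, x d * φ d a) = 0 := by
    have h1 : (∑ a : Fin 6, x a * ∑ d : Fin 6, x d * φ d a)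
        = ∑ a : Fin 6, ∑ d : Fin 6, x a * (x d * φ d a) :=
      Finset.sum_congr rfl (fun a _ => Finset.mul_sum _ _ _)
    have h2 : (∑ a : Fin 6, ∑ d : Fin 6, x a * (x d * φ d a))
        = ∑ d : Fin 6, ∑ a : Fin 6, x a * (x d * φ d a) := Finset.sum_comm
    have h3 : (∑ d : Fin 6, ∑ a : Fin 6, x a * (x d * φ d a))
        = -(∑ d : Fin 6, ∑ a : Fin 6, x d * (x a * φ a d)) := by
      rw [← Finset.sum_neg_distrib]
      refine Finset.sum_congr rfl (fun d _ => ?_)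
      rw [← Finset.sum_neg_distrib]
      refine Finset.sum_congr rfl (fun a _ => ?_)
      rw [hφ d a]; ring
    have h4 : (∑ d : Fin 6, ∑ a : Fin 6, x d * (x a * φ a d))
        = ∑ a : Fin 6, ∑ d : Fin 6, x a * (x d * φ d a) := rfl
    rw [h1]
    have := h2.trans (h3.trans (by rw [h4]))
    linarith
  constructor
  · intro a b c
    rw [key a b c, key b c a, key c a b, hφ c b, hφ a c, hφ b a]
    have e1 : (if c = a then (1:ℝ) else 0) = (if a = c then 1 else 0) := by simp [eq_comm]
    have e2 : (if c = b then (1:ℝ) else 0) = (if b = c then 1 else 0) := by simp [eq_comm]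
    have e3 : (if b = a then (1:ℝ) else 0) = (if a = b then 1 else 0) := by simp [eq_comm]
    rw [e1, e2, e3]
    ring
  · intro b
    have hLsum : (∑ a : Fin 6, fderiv ℝ (fun y => G y a b) x (Pi.single a 1))
        = -8 * ∑ d : Fin 6, x d * φ d b := by
      have hterm : ∀ a : Fin 6, fderiv ℝ (fun y => G y a b) x (Pi.single a 1)
          = -3 * (x a * φ a b) - (∑ d : Fin 6, x d * φ d b)
            + (if b = a then (∑ d : Fin 6, x d * φ d a) else 0) := by
        intro a; rw [key a b a]
        simp only [eq_self_iff_true, if_true, ite_mul, one_mul, zero_mul, hφ0 a, mul_zero]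
        ring
      rw [Finset.sum_congr rfl (fun a _ => hterm a)]
      rw [Finset.sum_add_distrib, Finset.sum_sub_distrib, ← Finset.mul_sum,
        Finset.sum_ite_eq, Finset.sum_const, Finset.card_univ]
      simp
      ring
    have hterm2 : ∀ a : Fin 6, n x a * G x a b
        = -(2 - ∑ i, x i ^ 2) * (x a * φ a b) + (x a ^ 2) * (∑ d : Fin 6, x d * φ d b)
          - x b * (x a * ∑ d : Fin 6, x d * φ d a) := by
      intro a; rw [hn, hG, hσ]
      simp only [hn, neg_mul, Finset.sum_neg_distrib]
      ring
    have hRsum : (∑ a : Fin 6, n x a * G x a b)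
        = -(2 - ∑ i, x i ^ 2) * (∑ a : Fin 6, x a * φ a b)
          + (∑ i, x i ^ 2) * (∑ d : Fin 6, x d * φ d b) := by
      rw [Finset.sum_congr rfl (fun a _ => hterm2 a)]
      rw [Finset.sum_sub_distrib, Finset.sum_add_distrib, ← Finset.mul_sum,
        ← Finset.sum_mul, ← Finset.mul_sum, hC]
      ring
    rw [hσ, hLsum, hRsum]
    ring
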